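/- Let H be a quaternion algebra over a field F of characteristic 2, with basis 1, i, j, k where i² + i ∈ F, j² ∈ F is nonzero, and k = ij = j(i+1). Then the set of commutators {xy − yx : x, y ∈ H} equals {α j² + β j + γ k : α, β, γ ∈ F}, and this set is an F-vector subspace of H. -/

import Mathlib

/-- in characteristic 2, the set of commutators of a quaternion algebra
(basis `1, i, j, k`, `i² + i ∈ F`, `j² ∈ F` nonzero, `k = ij = j(i+1)`)
equals `{α j² + β j + γ k}` and is an `F`-subspace. -/
theorem stmt_6 (F : Type*) [Field F] (hchar : ringChar F = 2)
    (H : Type*) [Ring H] [Algebra F H]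
    (i j k : H)
    (bH : Module.Basis (Fin 4) F H)
    (hbasis : bH 0 = 1 ∧ bH 1 = i ∧ bH 2 = j ∧ bH 3 = k)
    (hi : ∃ t : F, i * i + i = algebraMap F H t)
    (hj : ∃ b : F, b ≠ 0 ∧ j * j = algebraMap F H b)
    (hk : k = i * j) (hij : i * j = j * (i + 1)) :
    {x : H | ∃ y z : H, x = y * z - z * y} =
      {x : H | ∃ α β γ : F, x = α • (j * j) + β • j + γ • k} ∧
    ∃ V : Submodule F H,
      (V : Set H) = {x : H | ∃ y z : H, x = y * z - z * y} := by
  obtain ⟨hb0, hb1, hb2, hb3⟩ := hbasis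
  obtain ⟨t, ht⟩ := hi
  obtain ⟨b, hb, hjj⟩ := hj
  have h2F : (2 : F) = 0 := by
    have : ((2:ℕ):F) = 0 := (ringChar.spec F 2).2 (by rw [hchar])
    exact_mod_cast this
  have haddH : ∀ x : H, x + x = 0 := by
    intro x
    have : (2:F) • x = 0 := by rw [h2F, zero_smul]
    rwa [two_smul] at this
  have hneg : ∀ x : H, -x = x := fun x => neg_eq_of_add_eq_zero_left (haddH x)
  -- canonical product rewrites
  have hij2 : i * j = j * i + j := by rw [hij]; noncomm_ring
  have hji2 : j * i = i * j + j := by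
    rw [hij2, add_assoc, haddH j, add_zero]
  have hii : i * i = algebraMap F H t + i := by
    have h := eq_sub_of_add_eq ht
    rw [h, sub_eq_add_neg, hneg]
  have hik2 : i * k = k * i + k := by
    have h1 : i * k = algebraMap F H t * j + i * j := by
      rw [hk, ← mul_assoc, hii, add_mul]
    have h2 : k * i = algebraMap F H t * j := by
      rw [hk, mul_assoc, hji2, mul_add, ← mul_assoc, hii, add_mul, add_assoc,
        haddH, add_zero]
    rw [h1, h2, hk]
  have hjk2 : j * k = k * j + j * j := by
    have h1 : j * k = i * (j * j) + j * j := by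
      rw [hk, ← mul_assoc, hji2, add_mul, mul_assoc]
    have h2 : k * j = i * (j * j) := by rw [hk, mul_assoc]
    rw [h1, h2]
  -- commutators of basis vectors
  have c12 : i * j - j * i = j := by rw [hij2]; abel
  have c21 : j * i - i * j = j := by rw [← neg_sub, c12, hneg]
  have c13 : i * k - k * i = k := by rw [hik2]; abel
  have c31 : k * i - i * k = k := by rw [← neg_sub, c13, hneg]
  have c23 : j * k - k * j = j * j := by rw [hjk2]; abel
  have c32 : k * j - j * k = j * j := by rw [← neg_sub, c23, hneg]
  -- the subspace
  set V : Submodule F H := Submodule.span F {(1:H), j, k} with hV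
  have h1V : (1:H) ∈ V := Submodule.subset_span (by simp)
  have hjV : j ∈ V := Submodule.subset_span (by simp)
  have hkV : k ∈ V := Submodule.subset_span (by simp)
  have hjjV : j * j ∈ V := by
    rw [hjj, Algebra.algebraMap_eq_smul_one]; exact V.smul_mem b h1V
  -- every commutator lies in V
  have key : ∀ y z : H, y * z - z * y ∈ V := by
    let f : H →ₗ[F] H →ₗ[F] H ⧸ V :=
      (LinearMap.mul F H).compr₂ V.mkQ - ((LinearMap.mul F H).flip).compr₂ V.mkQ
    have hf : ∀ y z : H, f y z = Submodule.Quotient.mk (y * z - z * y) := by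
      intro y z
      simp [f, LinearMap.sub_apply, LinearMap.compr₂_apply, LinearMap.mul_apply',
        LinearMap.flip_apply, Submodule.mkQ_apply, ← Submodule.Quotient.mk_sub]
    have hf0 : f = 0 := by
      refine bH.ext fun a => bH.ext fun c => ?_
      rw [hf, LinearMap.zero_apply, LinearMap.zero_apply,
        Submodule.Quotient.mk_eq_zero]
      have e0 : ∀ (h : (0:ℕ) < 4), (⟨0, h⟩ : Fin 4) = 0 := fun _ => rfl
      have e1 : ∀ (h : (1:ℕ) < 4), (⟨1, h⟩ : Fin 4) = 1 := fun _ => rfl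
      have e2 : ∀ (h : (2:ℕ) < 4), (⟨2, h⟩ : Fin 4) = 2 := fun _ => rfl
      have e3 : ∀ (h : (3:ℕ) < 4), (⟨3, h⟩ : Fin 4) = 3 := fun _ => rfl
      fin_cases a <;> fin_cases c <;>
        simp only [e0, e1, e2, e3, hb0, hb1, hb2, hb3, one_mul, mul_one,
          sub_self] <;>
        first
          | exact V.zero_mem
          | (rw [c12]; exact hjV)
          | (rw [c21]; exact hjV)
          | (rw [c13]; exact hkV)
          | (rw [c31]; exact hkV)
          | (rw [c23]; exact hjjV)
          | (rw [c32]; exact hjjV)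
    intro y z
    have h : (Submodule.Quotient.mk (y * z - z * y) : H ⧸ V) = 0 := by
      rw [← hf y z, hf0]; rfl
    exact (Submodule.Quotient.mk_eq_zero V).1 h
  -- RHS set is contained in commutator set
  have hsub1 : {x : H | ∃ α β γ : F, x = α • (j * j) + β • j + γ • k} ⊆
      {x : H | ∃ y z : H, x = y * z - z * y} := by
    rintro x ⟨α, β, γ, rfl⟩
    by_cases hα : α = 0
    · refine ⟨i, β • j + γ • k, ?_⟩
      subst hα
      simp only [mul_add, add_mul, smul_mul_assoc, mul_smul_comm, smul_smul]
      rw [hij2, hik2]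
      module
    · refine ⟨j + (γ * α⁻¹) • i, β • i + α • k, ?_⟩
      simp only [mul_add, add_mul, smul_mul_assoc, mul_smul_comm, smul_smul]
      rw [hij2, hik2, hjk2]
      match_scalars <;>
        first
          | ring1
          | linear_combination β * h2F
          | linear_combination (-β) * h2F
          | field_simp
  have hsub2 : {x : H | ∃ y z : H, x = y * z - z * y} ⊆ (V : Set H) := by
    rintro x ⟨y, z, rfl⟩; exact key y z
  have hsub3 : (V : Set H) ⊆
      {x : H | ∃ α β γ : F, x = α • (j * j) + β • j + γ • k} := by
    intro x hx
    rw [SetLike.mem_coe, hV, Submodule.mem_span_insert] at hx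
    obtain ⟨a, z, hz, rfl⟩ := hx
    rw [Submodule.mem_span_pair] at hz
    obtain ⟨β, γ, rfl⟩ := hz
    refine ⟨a * b⁻¹, β, γ, ?_⟩
    rw [hjj, Algebra.algebraMap_eq_smul_one, smul_smul]
    rw [mul_assoc, inv_mul_cancel₀ hb, mul_one, add_assoc]
  refine ⟨Set.Subset.antisymm (hsub2.trans hsub3) hsub1,
    V, Set.Subset.antisymm (hsub3.trans hsub1) hsub2⟩
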